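/- Let z, w ∈ U and 0 < α ≤ 1. Let p_α be the Pick function p_α(u) = 4αu/(1 − u + √((1 − u)² + 4αu))² (branch of the square root equal to 1 at u = 0), and for a ∈ U let B_a(ζ) = ((1 − conj(a))/(1 − a)) · (ζ − a)/(1 − ζ conj(a)). Then the composition φ* = B_w^{−1} ∘ p_α ∘ B_z is a holomorphic injective map of U into U with φ*(z) = w, φ* has angular limit 1 at the boundary point 1 and finite angular derivative β = (1/√α) · ((1 − |z|²)/|1 − z|²) · (|1 − w|²/(1 − |w|²)) at 1, and |φ*'(z)| = α(1 − |w|²)/(1 − |z|²) = (1/β²) · ((1 − |z|²)/|1 − z|⁴) · (|1 − w|⁴/(1 − |w|²)); i.e. φ* attains equality in the lower Schwarz–Pick estimate of Theorem 1. -/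

import Mathlib

open Complex Set Filter Finset

noncomputable section

/-- The open unit disk in the complex plane. -/
def unitDisk : Set ℂ := {z : ℂ | ‖z‖ < 1}

/-- A Stolz angle at a boundary point `ζ` with opening parameter `k > 1`. -/
def stolzAngle (ζ : ℂ) (k : ℝ) : Set ℂ :=
  {z | z ∈ unitDisk ∧ ‖z - ζ‖ < k * (1 - ‖z‖)}

/-- `φ` has angular limit `L` at the boundary point `ζ`: `φ z → L` as `z → ζ`
within every Stolz angle at `ζ`. -/
def HasAngularLimit (φ : ℂ → ℂ) (ζ L : ℂ) : Prop :=
  ∀ k : ℝ, 1 < k → Tendsto φ (nhdsWithin ζ (stolzAngle ζ k)) (nhds L)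

/-- `φ` has finite angular limit `L` and finite angular derivative `β` at the
boundary point `ζ`. -/
def HasAngularDerivAt (φ : ℂ → ℂ) (ζ L β : ℂ) : Prop :=
  HasAngularLimit φ ζ L ∧
  ∀ k : ℝ, 1 < k →
    Tendsto (fun z => (φ z - L) / (z - ζ)) (nhdsWithin ζ (stolzAngle ζ k)) (nhds β)

lemma unitDisk_eq : unitDisk = Metric.ball (0:ℂ) 1 := by
  ext u; simp [unitDisk, Metric.mem_ball, Complex.dist_eq]

lemma unitDisk_open : IsOpen unitDisk := unitDisk_eq ▸ Metric.isOpen_ball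

lemma unitDisk_conv : Convex ℝ unitDisk := unitDisk_eq ▸ convex_ball 0 1

lemma one_sub_ne {x : ℂ} (h : ‖x‖ < 1) : 1 - x ≠ 0 := by
  intro h0
  have : x = 1 := by linear_combination -h0
  simp [this] at h

-- |u*conj a| < 1 when |u|<1, |a|<1
lemma abs_mul_conj_lt {u a : ℂ} (hu : ‖u‖ < 1) (ha : ‖a‖ < 1) :
    ‖u * (starRingEnd ℂ) a‖ < 1 := by
  rw [norm_mul, Complex.norm_conj]
  nlinarith [norm_nonneg u, norm_nonneg a]

lemma mobius_lt_one {a u : ℂ} (ha : ‖a‖ < 1) (hu : ‖u‖ < 1) :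
    ‖(u - a) / (1 - u * (starRingEnd ℂ) a)‖ < 1 := by
  have hden := one_sub_ne (abs_mul_conj_lt hu ha)
  have hkey : Complex.normSq (1 - u * (starRingEnd ℂ) a) - Complex.normSq (u - a)
      = (1 - Complex.normSq a) * (1 - Complex.normSq u) := by
    simp only [Complex.normSq_apply, Complex.sub_re, Complex.sub_im, Complex.one_re,
      Complex.one_im, Complex.mul_re, Complex.mul_im, Complex.conj_re, Complex.conj_im]
    ring
  have h1 : Complex.normSq a < 1 := by
    have := Complex.sq_norm a
    nlinarith [norm_nonneg a]
  have h2 : Complex.normSq u < 1 := by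
    have := Complex.sq_norm u
    nlinarith [norm_nonneg u]
  have hlt : Complex.normSq (u - a) < Complex.normSq (1 - u * (starRingEnd ℂ) a) := by
    nlinarith
  rw [norm_div, div_lt_one (norm_pos_iff.mpr hden)]
  rw [Complex.norm_def, Complex.norm_def]
  exact Real.sqrt_lt_sqrt (Complex.normSq_nonneg _) hlt

lemma ne_add {c x : ℂ} (h : ‖x‖ < ‖c‖) : c + x ≠ 0 := by
  intro h0
  have : x = -c := by linear_combination h0
  rw [this, norm_neg] at h
  exact absurd h (lt_irrefl _)

lemma conj_one_sub (w : ℂ) : (starRingEnd ℂ) (1 - w) = 1 - (starRingEnd ℂ) w := by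
  simp

lemma cfac_abs {w : ℂ} (hw : ‖w‖ < 1) :
    ‖(1 - (starRingEnd ℂ) w) / (1 - w)‖ = 1 := by
  have h1 : (1:ℂ) - w ≠ 0 := one_sub_ne hw
  rw [norm_div, ← conj_one_sub, Complex.norm_conj, div_self (norm_ne_zero_iff.mpr h1)]

lemma cfac_ne {w : ℂ} (hw : ‖w‖ < 1) :
    (1 - (starRingEnd ℂ) w) / (1 - w) ≠ 0 := by
  intro h0
  have := cfac_abs hw
  rw [h0] at this; simp at this

lemma mobius_inv {w v : ℂ} (hw : ‖w‖ < 1) (hv : ‖v‖ < 1) :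
    ‖(v + ((1 - (starRingEnd ℂ) w) / (1 - w)) * w) /
        (((1 - (starRingEnd ℂ) w) / (1 - w)) + v * (starRingEnd ℂ) w)‖ < 1 ∧
      ((1 - (starRingEnd ℂ) w) / (1 - w)) *
        ((((v + ((1 - (starRingEnd ℂ) w) / (1 - w)) * w) /
          (((1 - (starRingEnd ℂ) w) / (1 - w)) + v * (starRingEnd ℂ) w)) - w) /
         (1 - ((v + ((1 - (starRingEnd ℂ) w) / (1 - w)) * w) /
          (((1 - (starRingEnd ℂ) w) / (1 - w)) + v * (starRingEnd ℂ) w)) * (starRingEnd ℂ) w)) = v := by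
  set c := (1 - (starRingEnd ℂ) w) / (1 - w) with hc
  have hcabs : ‖c‖ = 1 := cfac_abs hw
  have hcne : c ≠ 0 := cfac_ne hw
  have hden : c + v * (starRingEnd ℂ) w ≠ 0 := by
    apply ne_add; rw [hcabs]; exact abs_mul_conj_lt hv hw
  set ζ := (v + c * w) / (c + v * (starRingEnd ℂ) w) with hζ
  have habsvc : ‖v / c‖ < 1 := by
    rw [norm_div, hcabs, div_one]; exact hv
  have hden2 : (1:ℂ) + (v/c) * (starRingEnd ℂ) w ≠ 0 := by
    apply ne_add; simpa using abs_mul_conj_lt habsvc hw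
  have hζeq : ζ = ((v/c) - (-w)) / (1 - (v/c) * (starRingEnd ℂ) (-w)) := by
    rw [hζ, map_neg, sub_neg_eq_add, mul_neg, sub_neg_eq_add]
    field_simp
  have hζabs : ‖ζ‖ < 1 := by
    rw [hζeq]
    exact mobius_lt_one (by simpa using hw) habsvc
  refine ⟨hζabs, ?_⟩
  have hden3 : 1 - ζ * (starRingEnd ℂ) w ≠ 0 := one_sub_ne (abs_mul_conj_lt hζabs hw)
  clear_value c
  clear hc hζeq hden2 habsvc hcabs
  rw [hζ] at hden3 ⊢
  have h1w : (1:ℂ) - w * (starRingEnd ℂ) w ≠ 0 := one_sub_ne (abs_mul_conj_lt hw hw)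
  have e1 : (v + c * w) / (c + v * (starRingEnd ℂ) w) - w
      = v * (1 - w * (starRingEnd ℂ) w) / (c + v * (starRingEnd ℂ) w) := by
    rw [eq_div_iff hden, sub_mul, div_mul_cancel₀ _ hden]; ring
  have e2 : 1 - (v + c * w) / (c + v * (starRingEnd ℂ) w) * (starRingEnd ℂ) w
      = c * (1 - w * (starRingEnd ℂ) w) / (c + v * (starRingEnd ℂ) w) := by
    rw [div_mul_eq_mul_div, eq_div_iff hden, sub_mul, div_mul_cancel₀ _ hden]; ring
  rw [e1, e2, div_div_div_cancel_right₀ hden, mul_div_mul_right _ _ h1w]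
  field_simp


lemma koebe_omit {α t : ℝ} (hα0 : 0 < α) (hα1 : α ≤ 1) {u : ℂ}
    (hu : ‖u‖ < 1) (ht : t ≤ -1/(4*α)) (heq : u = (t:ℂ) * (1-u)^2) : False := by
  have habs : u.re^2 + u.im^2 < 1 := by
    have h1 : ‖u‖ ^ 2 < 1 := by nlinarith [norm_nonneg u]
    rw [Complex.sq_norm, Complex.normSq_apply] at h1
    nlinarith
  have ht4 : 4*t ≤ -1 := by
    have h1 : 4*α*t ≤ -1 := by
      rw [le_div_iff₀ (by positivity : (0:ℝ) < 4*α)] at ht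
      nlinarith
    nlinarith
  rw [Complex.ext_iff] at heq
  simp only [Complex.mul_re, Complex.mul_im, Complex.ofReal_re, Complex.ofReal_im,
    Complex.sub_re, Complex.sub_im, Complex.one_re, Complex.one_im, pow_two] at heq
  obtain ⟨hre, him⟩ := heq
  rcases eq_or_ne u.im 0 with hy | hy
  · rw [hy] at hre habs
    nlinarith [sq_nonneg (1+u.re), sq_nonneg (1-u.re), mul_nonneg (by linarith : (0:ℝ) ≤ -4*t-1) (sq_nonneg (1-u.re))]
  · have h2 : 2*t*(1-u.re) = -1 := by
      have h0 : u.im * (1 + 2*t*(1-u.re)) = 0 := by linear_combination him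
      rcases mul_eq_zero.1 h0 with h | h
      · exact absurd h hy
      · linarith [h]
    have hxy : u.re^2 + u.im^2 = 1 := by
      linear_combination (-2*(1-u.re)) * hre + (u.im^2 - (1-u.re)^2) * h2
    linarith

lemma unitDisk_eq' : unitDisk = Metric.ball (0:ℂ) 1 := by
  ext u; simp [unitDisk, Metric.mem_ball, Complex.dist_eq]

lemma re_pos {α : ℝ} (hα0 : 0 < α) (hα1 : α ≤ 1) {s : ℂ → ℂ}
    (hs : DifferentiableOn ℂ s unitDisk) (hs0 : s 0 = 1)
    (hssq : ∀ u ∈ unitDisk, (s u) ^ 2 = (1 - u) ^ 2 + 4 * (α : ℂ) * u) :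
    ∀ u ∈ unitDisk, 0 < (s u / (1 - u)).re := by
  have hopen : IsOpen unitDisk := unitDisk_eq' ▸ Metric.isOpen_ball
  have hcont : ContinuousOn (fun u => (s u / (1 - u)).re) unitDisk := by
    apply Complex.continuous_re.comp_continuousOn
    exact hs.continuousOn.div (continuousOn_const.sub continuousOn_id)
      (fun u hu => one_sub_ne hu)
  have hne : ∀ u ∈ unitDisk, (s u / (1 - u)).re ≠ 0 := by
    intro u hu h0
    have hA : (1:ℂ) - u ≠ 0 := one_sub_ne hu
    set g := s u / (1 - u) with hg
    have hsu : s u = g * (1 - u) := (div_mul_cancel₀ _ hA).symm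
    have hg2 : g ^ 2 = ((-(g.im ^ 2) : ℝ) : ℂ) := by
      rw [Complex.ext_iff]
      constructor
      · simp [pow_two, Complex.mul_re, h0]
      · simp [pow_two, Complex.mul_im, h0]
    have e1 : (g * (1 - u)) ^ 2 = (1 - u) ^ 2 + 4 * (α:ℂ) * u := by
      rw [← hsu]; exact hssq u hu
    have e2 : ((-(g.im ^ 2) : ℝ) : ℂ) * (1 - u) ^ 2 = (1 - u) ^ 2 + 4 * (α:ℂ) * u := by
      rw [← hg2]; linear_combination e1
    set t : ℝ := -(g.im ^ 2 + 1) / (4 * α) with hT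
    have h4α : (4 * (α:ℂ)) ≠ 0 := by
      simp only [ne_eq, mul_eq_zero, Complex.ofReal_eq_zero]
      push_neg
      exact ⟨by norm_num, ne_of_gt hα0⟩
    have heq : u = (t:ℝ) * (1 - u)^2 := by
      rw [hT]
      push_cast at e2 ⊢
      rw [div_mul_eq_mul_div, eq_div_iff h4α]
      linear_combination -e2
    have ht : t ≤ -1 / (4*α) := by
      rw [hT, div_le_div_iff₀ (by positivity) (by positivity : (0:ℝ) < 4*α)]
      nlinarith [sq_nonneg g.im]
    exact koebe_omit hα0 hα1 hu ht heq
  intro u hu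
  rcases lt_trichotomy 0 ((s u / (1 - u)).re) with h | h | h
  · exact h
  · exact absurd h.symm (hne u hu)
  · exfalso
    have h0mem : (0:ℂ) ∈ unitDisk := by simp [unitDisk]
    have hf0 : (s 0 / (1 - 0)).re = 1 := by simp [hs0]
    have hpc : IsPreconnected unitDisk := (unitDisk_eq' ▸ convex_ball (0:ℂ) 1).isPreconnected
    have := hpc.intermediate_value (a := u) (b := 0) hu h0mem hcont
    have h0mem' : (0:ℝ) ∈ Icc ((s u / (1-u)).re) ((s 0 / (1-0)).re) := by
      rw [hf0]; exact ⟨le_of_lt h, by norm_num⟩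
    obtain ⟨v, hv, hv0⟩ := this h0mem'
    exact hne v hv hv0


lemma s_tendsto {α : ℝ} (hα0 : 0 < α) {s : ℂ → ℂ}
    (hs : DifferentiableOn ℂ s unitDisk) (hs0 : s 0 = 1)
    (hssq : ∀ u ∈ unitDisk, (s u) ^ 2 = (1 - u) ^ 2 + 4 * (α : ℂ) * u) :
    Tendsto s (nhdsWithin 1 unitDisk) (nhds ((2 * Real.sqrt α : ℝ) : ℂ)) := by
  set q : ℂ → ℂ := fun u => (1 - u) ^ 2 + 4 * (α:ℂ) * u with hqdef
  have hqcont : Continuous q := by fun_prop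
  have hq1 : q 1 = ((4*α : ℝ) : ℂ) := by rw [hqdef]; push_cast; ring
  have hq1re : 0 < (q 1).re := by rw [hq1]; simp; positivity
  have hWopen : IsOpen {u : ℂ | 0 < (q u).re} :=
    isOpen_lt continuous_const (Complex.continuous_re.comp hqcont)
  obtain ⟨δ, hδ0, hδball⟩ := Metric.mem_nhds_iff.1 (hWopen.mem_nhds hq1re)
  set δ' := min δ 1 with hδ'
  have hδ'0 : 0 < δ' := lt_min hδ0 one_pos
  have hδ'1 : δ' ≤ 1 := min_le_right _ _
  set V := unitDisk ∩ Metric.ball (1:ℂ) δ with hV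
  have hVsub : ∀ u ∈ V, 0 < (q u).re := fun u hu => hδball hu.2
  have hVqne : ∀ u ∈ V, q u ≠ 0 := by
    intro u hu h0
    have := hVsub u hu
    rw [h0] at this; simp at this
  set σ : ℂ → ℂ := fun u => (q u) ^ ((1:ℂ)/2) with hσdef
  have hσsq : ∀ u, q u ≠ 0 → σ u ^ 2 = q u := by
    intro u hqu
    rw [hσdef]
    simp only []
    rw [pow_two, ← Complex.cpow_add _ _ hqu]
    norm_num
  have hσca : ∀ u : ℂ, 0 < (q u).re → ContinuousAt σ u := by
    intro u hu
    exact (_root_.continuousAt_cpow_const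
      (Complex.mem_slitPlane_iff.2 (Or.inl hu))).comp hqcont.continuousAt
  have hqU : ∀ u ∈ unitDisk, q u = s u ^ 2 := fun u hu => (hssq u hu).symm
  -- the sign function e = s / σ on V
  have he_pm : ∀ u ∈ V, s u / σ u = 1 ∨ s u / σ u = -1 := by
    intro u hu
    have hσne : σ u ≠ 0 := by
      intro h0
      have := hσsq u (hVqne u hu); rw [h0] at this; simp at this
      exact (hVqne u hu) this.symm
    have : (s u / σ u) * (s u / σ u) = 1 := by
      field_simp
      rw [hσsq u (hVqne u hu)]
      exact (hqU u hu.1).symm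
    exact mul_self_eq_one_iff.1 this
  -- positivity of Re s on the segment [0,1)
  have hseg : ∀ t : ℝ, 0 ≤ t → t < 1 → 0 < (s (t:ℂ)).re := by
    intro t1 ht0 ht1
    have hsubU : ∀ t : ℝ, t ∈ Icc 0 t1 → (t:ℂ) ∈ unitDisk := by
      intro t ht
      simp only [unitDisk, mem_setOf_eq, Complex.norm_real, Real.norm_eq_abs]
      rw [_root_.abs_of_nonneg ht.1]; linarith [ht.2]
    have hcont : ContinuousOn (fun t : ℝ => (s (t:ℂ)).re) (Icc 0 t1) := by
      apply Complex.continuous_re.comp_continuousOn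
      exact hs.continuousOn.comp Complex.continuous_ofReal.continuousOn hsubU
    have hne : ∀ t : ℝ, t ∈ Icc 0 t1 → (s (t:ℂ)).re ≠ 0 := by
      intro t ht h0
      have htU : (t:ℂ) ∈ unitDisk := hsubU t ht
      have h1 : (s (t:ℂ)) ^ 2 = ((-(s (t:ℂ)).im ^ 2 : ℝ) : ℂ) := by
        rw [Complex.ext_iff]
        constructor
        · simp [pow_two, Complex.mul_re, h0]
        · simp [pow_two, Complex.mul_im, h0]
      have h2 := hssq _ htU
      rw [h1] at h2
      have h3 : -(s (t:ℂ)).im ^ 2 = (1-t)^2 + 4*α*t := by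
        have := congrArg Complex.re h2
        simpa [Complex.add_re, Complex.mul_re, Complex.ofReal_re, pow_two,
          Complex.sub_re, Complex.mul_im, Complex.sub_im] using this
      nlinarith [sq_nonneg (s (t:ℂ)).im, sq_nonneg (1-t), ht.1, ht.2, mul_pos hα0 (lt_of_lt_of_le hα0 (le_refl α))]
    by_contra hcon
    push_neg at hcon
    have h0ne := hne 0 ⟨le_refl _, ht0⟩
    have hf0 : (s ((0:ℝ):ℂ)).re = 1 := by norm_num [hs0]
    have ht1ne := hne t1 ⟨ht0, le_refl _⟩
    have hlt : (s ((t1:ℝ):ℂ)).re < 0 := lt_of_le_of_ne hcon ht1ne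
    have := intermediate_value_Icc' ht0 hcont
    have h0mem : (0:ℝ) ∈ Icc ((s ((t1:ℝ):ℂ)).re) ((s ((0:ℝ):ℂ)).re) := by
      rw [hf0]; exact ⟨le_of_lt hlt, by norm_num⟩
    obtain ⟨t2, ht2, ht2e⟩ := this h0mem
    exact hne t2 ht2 ht2e
  -- a real point in V
  set t0 : ℝ := 1 - δ'/2 with ht0def
  have ht00 : 0 ≤ t0 := by rw [ht0def]; linarith
  have ht01 : t0 < 1 := by rw [ht0def]; linarith
  have ht0mem : (t0:ℂ) ∈ V := by
    constructor
    · simp only [unitDisk, mem_setOf_eq, Complex.norm_real, Real.norm_eq_abs]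
      rw [_root_.abs_of_nonneg ht00]; exact ht01
    · rw [Metric.mem_ball, Complex.dist_eq]
      have : (t0:ℂ) - 1 = ((t0 - 1 : ℝ) : ℂ) := by push_cast; ring
      rw [this, Complex.norm_real, Real.norm_eq_abs, _root_.abs_of_nonpos (by linarith)]
      have : δ' ≤ δ := min_le_left _ _
      rw [ht0def]; simp only [neg_sub]; linarith
  have hq0pos : (0:ℝ) < (1-t0)^2 + 4*α*t0 := by nlinarith [sq_nonneg (1-t0)]
  have hσt0 : σ (t0:ℂ) = ((((1-t0)^2 + 4*α*t0) ^ ((1:ℝ)/2) : ℝ) : ℂ) := by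
    have hq0 : q (t0:ℂ) = (((1-t0)^2 + 4*α*t0 : ℝ) : ℂ) := by rw [hqdef]; push_cast; ring
    rw [hσdef]
    simp only []
    rw [hq0, show ((1:ℂ)/2) = (((1:ℝ)/2 : ℝ) : ℂ) by norm_num,
      ← Complex.ofReal_cpow (le_of_lt hq0pos)]
  have hr0pos : (0:ℝ) < ((1-t0)^2 + 4*α*t0) ^ ((1:ℝ)/2) := Real.rpow_pos_of_pos hq0pos _
  have hσt0ne : σ (t0:ℂ) ≠ 0 := by
    rw [hσt0]; exact_mod_cast ne_of_gt hr0pos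
  have het0 : s (t0:ℂ) / σ (t0:ℂ) = 1 := by
    rcases he_pm _ ht0mem with h | h
    · exact h
    · exfalso
      have hst0 : s (t0:ℂ) = -σ (t0:ℂ) := by
        field_simp at h
        linear_combination h
      have : (s (t0:ℂ)).re = -(((1-t0)^2 + 4*α*t0) ^ ((1:ℝ)/2)) := by
        rw [hst0, hσt0]
        simp
      have h2 := hseg t0 ht00 ht01
      rw [this] at h2
      linarith
  have hVσne : ∀ u ∈ V, σ u ≠ 0 := by
    intro u hu h0
    have := hσsq u (hVqne u hu)
    rw [h0] at this; simp at this
    exact (hVqne u hu) this.symm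
  have hsign : ∀ u ∈ V, s u = σ u := by
    intro u hu
    rcases he_pm u hu with h | h
    · have := hVσne u hu
      field_simp at h
      exact h
    · exfalso
      have hVpc : IsPreconnected V :=
        ((unitDisk_eq' ▸ convex_ball (0:ℂ) 1).inter (convex_ball (1:ℂ) δ)).isPreconnected
      have hfc : ContinuousOn (fun u => (s u / σ u).re) V := by
        apply Complex.continuous_re.comp_continuousOn
        apply ContinuousOn.div
        · exact hs.continuousOn.mono (inter_subset_left)
        · exact fun v hv => ((hσca v (hVsub v hv)).continuousWithinAt)
        · exact hVσne
      have := hVpc.intermediate_value (a := u) (b := (t0:ℂ)) hu ht0mem hfc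
      have h0mem : (0:ℝ) ∈ Icc ((s u / σ u).re) ((s (t0:ℂ) / σ (t0:ℂ)).re) := by
        rw [h, het0]; simp
      obtain ⟨v, hv, hv0⟩ := this h0mem
      have hv0' : (s v / σ v).re = 0 := hv0
      rcases he_pm v hv with h' | h' <;> rw [h'] at hv0' <;> norm_num at hv0'
  -- conclusion
  have hσ1 : σ 1 = ((2 * Real.sqrt α : ℝ) : ℂ) := by
    rw [hσdef]
    simp only []
    rw [hq1, show ((1:ℂ)/2) = (((1:ℝ)/2 : ℝ) : ℂ) by norm_num,
      ← Complex.ofReal_cpow (by positivity : (0:ℝ) ≤ 4*α)]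
    norm_cast
    rw [← Real.sqrt_eq_rpow]
    rw [show (4*α : ℝ) = 2^2 * α by norm_num, Real.sqrt_mul (by positivity) α,
      Real.sqrt_sq (by norm_num)]
  have hev : ∀ᶠ u in nhdsWithin 1 unitDisk, s u = σ u := by
    have h1 : ∀ᶠ u in nhdsWithin 1 unitDisk, u ∈ Metric.ball (1:ℂ) δ :=
      mem_nhdsWithin_of_mem_nhds (Metric.ball_mem_nhds 1 hδ0)
    have h2 : ∀ᶠ u in nhdsWithin 1 unitDisk, u ∈ unitDisk := self_mem_nhdsWithin
    filter_upwards [h1, h2] with u hu1 hu2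
    exact hsign u ⟨hu2, hu1⟩
  have hσtendsto : Tendsto σ (nhdsWithin 1 unitDisk) (nhds ((2 * Real.sqrt α : ℝ) : ℂ)) := by
    rw [← hσ1]
    exact ((hσca 1 hq1re).tendsto).mono_left nhdsWithin_le_nhds
  exact hσtendsto.congr' (by filter_upwards [hev] with u hu using hu.symm)

lemma one_sub_mul_conj (x : ℂ) :
    1 - x * (starRingEnd ℂ) x = ((1 - ‖x‖ ^ 2 : ℝ) : ℂ) := by
  rw [Complex.mul_conj, ← Complex.sq_norm]
  push_cast
  ring

lemma mul_conj_self (x : ℂ) :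
    ((starRingEnd ℂ) x) * x = ((‖x‖ ^ 2 : ℝ) : ℂ) := by
  rw [mul_comm, Complex.mul_conj, ← Complex.sq_norm]

lemma abs_div_lt_one_of_normSq {x y : ℂ} (hy : y ≠ 0)
    (h : Complex.normSq x < Complex.normSq y) : ‖x / y‖ < 1 := by
  rw [norm_div, div_lt_one (norm_pos_iff.mpr hy), Complex.norm_def, Complex.norm_def]
  exact Real.sqrt_lt_sqrt (Complex.normSq_nonneg _) h

set_option maxHeartbeats 1000000 in
/-- **The extremal function for Theorem 1.** For `z, w ∈ U` and `0 < α ≤ 1`,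
the composition `φ* = B_w⁻¹ ∘ p_α ∘ B_z` (where `p_α` is the Pick function and
`B_a(ζ) = ((1 − conj a)/(1 − a))·(ζ − a)/(1 − ζ conj a)`, and `ψ` is the
inverse of `B_w` on `U`) is an injective holomorphic self-map of `U` with
`φ*(z) = w`, angular limit `1` and finite angular derivative
`β = (1/√α)·((1 − |z|²)/|1 − z|²)·(|1 − w|²/(1 − |w|²))` at the boundary
point `1`, and
`|φ*'(z)| = α(1 − |w|²)/(1 − |z|²) = (1/β²)·((1 − |z|²)/|1 − z|⁴)·(|1 − w|⁴/(1 − |w|²))`;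
i.e. `φ*` attains equality in the lower Schwarz–Pick estimate. -/
theorem extremal_function_one_boundary_point
    (z w : ℂ) (hz : z ∈ unitDisk) (hw : w ∈ unitDisk)
    (α : ℝ) (hα0 : 0 < α) (hα1 : α ≤ 1)
    (s : ℂ → ℂ) (hs : DifferentiableOn ℂ s unitDisk) (hs0 : s 0 = 1)
    (hssq : ∀ u ∈ unitDisk, (s u) ^ 2 = (1 - u) ^ 2 + 4 * (α : ℂ) * u)
    (p : ℂ → ℂ) (hp : ∀ u : ℂ, p u = 4 * (α : ℂ) * u / (1 - u + s u) ^ 2)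
    (Bz : ℂ → ℂ)
    (hBz : ∀ ζ : ℂ, Bz ζ =
      ((1 - (starRingEnd ℂ) z) / (1 - z)) * ((ζ - z) / (1 - ζ * (starRingEnd ℂ) z)))
    (Bw : ℂ → ℂ)
    (hBw : ∀ ζ : ℂ, Bw ζ =
      ((1 - (starRingEnd ℂ) w) / (1 - w)) * ((ζ - w) / (1 - ζ * (starRingEnd ℂ) w)))
    (ψ : ℂ → ℂ)
    (hψ1 : ∀ u ∈ unitDisk, ψ (Bw u) = u)
    (hψ2 : ∀ u ∈ unitDisk, Bw (ψ u) = u)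
    (φ : ℂ → ℂ) (hφ : ∀ u : ℂ, φ u = ψ (p (Bz u)))
    (β : ℝ)
    (hβ : β = (1 / Real.sqrt α) *
      ((1 - ‖z‖ ^ 2) / ‖1 - z‖ ^ 2) *
      (‖1 - w‖ ^ 2 / (1 - ‖w‖ ^ 2))) :
    DifferentiableOn ℂ φ unitDisk ∧
    InjOn φ unitDisk ∧
    MapsTo φ unitDisk unitDisk ∧
    φ z = w ∧
    HasAngularDerivAt φ 1 1 (β : ℂ) ∧
    ‖deriv φ z‖ = α * (1 - ‖w‖ ^ 2) / (1 - ‖z‖ ^ 2) ∧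
    ‖deriv φ z‖ =
      (1 / β ^ 2) * ((1 - ‖z‖ ^ 2) / ‖1 - z‖ ^ 4) *
        (‖1 - w‖ ^ 4 / (1 - ‖w‖ ^ 2)) := by
  have hz' : ‖z‖ < 1 := hz
  have hw' : ‖w‖ < 1 := hw
  have hz1 : (1:ℂ) - z ≠ 0 := one_sub_ne hz'
  have hw1 : (1:ℂ) - w ≠ 0 := one_sub_ne hw'
  have hzc1 : (1:ℂ) - (starRingEnd ℂ) z ≠ 0 := by
    apply one_sub_ne; rw [Complex.norm_conj]; exact hz'
  have hwc1 : (1:ℂ) - (starRingEnd ℂ) w ≠ 0 := by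
    apply one_sub_ne; rw [Complex.norm_conj]; exact hw'
  set cz := (1 - (starRingEnd ℂ) z) / (1 - z) with hcz
  set cw := (1 - (starRingEnd ℂ) w) / (1 - w) with hcw
  have hczabs : ‖cz‖ = 1 := cfac_abs hz'
  have hcwabs : ‖cw‖ = 1 := cfac_abs hw'
  have hczne : cz ≠ 0 := cfac_ne hz'
  have hcwne : cw ≠ 0 := cfac_ne hw'
  have hαc : ((α:ℂ)) ≠ 0 := Complex.ofReal_ne_zero.2 (ne_of_gt hα0)
  have hdenz : ∀ u : ℂ, ‖u‖ < 1 → 1 - u * (starRingEnd ℂ) z ≠ 0 :=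
    fun u hu => one_sub_ne (abs_mul_conj_lt hu hz')
  have hdenw : ∀ u : ℂ, ‖u‖ < 1 → 1 - u * (starRingEnd ℂ) w ≠ 0 :=
    fun u hu => one_sub_ne (abs_mul_conj_lt hu hw')
  -- Bz maps the disk to the disk
  have hBzu : ∀ u ∈ unitDisk, Bz u ∈ unitDisk := by
    intro u hu
    rw [hBz u]
    show ‖_‖ < 1
    rw [norm_mul, hczabs, one_mul]
    exact mobius_lt_one hz' hu
  -- Bz is injective on the disk
  have hBzinj : ∀ u ∈ unitDisk, ∀ v ∈ unitDisk, Bz u = Bz v → u = v := by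
    intro u hu v hv huv
    rw [hBz u, hBz v] at huv
    have h1 := hdenz u hu
    have h2 := hdenz v hv
    have huv2 := mul_left_cancel₀ hczne huv
    rw [div_eq_div_iff h1 h2] at huv2
    have h4 : (u - v) * (1 - z * (starRingEnd ℂ) z) = 0 := by linear_combination huv2
    rcases mul_eq_zero.1 h4 with h | h
    · linear_combination h
    · exact absurd h (one_sub_ne (abs_mul_conj_lt hz' hz'))
  -- p facts
  have hsA : ∀ t ∈ unitDisk, s t + (1 - t) ≠ 0 := by
    intro t ht h0
    have hst : s t = -(1 - t) := by linear_combination h0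
    have h1 := hssq t ht
    rw [hst] at h1
    have h2 : 4 * (α:ℂ) * t = 0 := by linear_combination -h1
    have h3 : t = 0 := by
      rcases mul_eq_zero.1 h2 with h | h
      · exact absurd h (mul_ne_zero (by norm_num) hαc)
      · exact h
    rw [h3] at hst
    rw [hs0] at hst
    norm_num at hst
  have hsA' : ∀ t ∈ unitDisk, 1 - t + s t ≠ 0 := by
    intro t ht h0
    exact hsA t ht (by linear_combination h0)
  have hpform : ∀ t ∈ unitDisk, p t = (s t - (1 - t)) / (s t + (1 - t)) := by
    intro t ht
    rw [hp t]
    rw [div_eq_div_iff (pow_ne_zero 2 (hsA' t ht)) (hsA t ht)]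
    linear_combination -(s t + (1 - t)) * (hssq t ht)
  have hpmem : ∀ t ∈ unitDisk, p t ∈ unitDisk := by
    intro t ht
    have hre := re_pos hα0 hα1 hs hs0 hssq t ht
    have hA : (1:ℂ) - t ≠ 0 := one_sub_ne ht
    have hkey : Complex.normSq (s t + (1 - t)) - Complex.normSq (s t - (1 - t))
        = 4 * ((s t) * (starRingEnd ℂ) (1 - t)).re := by
      simp only [Complex.normSq_apply, Complex.add_re, Complex.add_im, Complex.sub_re,
        Complex.sub_im, Complex.mul_re, Complex.mul_im, Complex.conj_re, Complex.conj_im,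
        Complex.one_re, Complex.one_im]
      ring
    have hfac : (s t) * (starRingEnd ℂ) (1 - t)
        = (s t / (1 - t)) * ((‖1 - t‖ ^ 2 : ℝ) : ℂ) := by
      rw [← mul_conj_self (1 - t)]
      field_simp
    have hrepos : 0 < ((s t) * (starRingEnd ℂ) (1 - t)).re := by
      rw [hfac]
      rw [Complex.mul_re]
      simp only [Complex.ofReal_re, Complex.ofReal_im, mul_zero, sub_zero]
      have : 0 < ‖1 - t‖ ^ 2 := by
        have := norm_pos_iff.mpr hA; positivity
      exact mul_pos hre this
    have hlt : Complex.normSq (s t - (1 - t)) < Complex.normSq (s t + (1 - t)) := by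
      linarith
    rw [hpform t ht]
    exact abs_div_lt_one_of_normSq (hsA t ht) hlt
  have hpinj : ∀ t ∈ unitDisk, ∀ t' ∈ unitDisk, p t = p t' → t = t' := by
    intro t ht t' ht' hpp
    rw [hpform t ht, hpform t' ht'] at hpp
    rw [div_eq_div_iff (hsA t ht) (hsA t' ht')] at hpp
    have h1 : s t * (1 - t') = s t' * (1 - t) := by linear_combination hpp / 2
    have h2 : (s t)^2 * (1 - t')^2 = (s t')^2 * (1 - t)^2 := by
      have := congrArg (· ^ 2) h1
      simpa [mul_pow] using this
    rw [hssq t ht, hssq t' ht'] at h2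
    have h3 : (4 * (α:ℂ)) * ((t - t') * (1 - t * t')) = 0 := by linear_combination h2
    rcases mul_eq_zero.1 h3 with h | h
    · exact absurd h (mul_ne_zero (by norm_num) hαc)
    · rcases mul_eq_zero.1 h with h' | h'
      · linear_combination h'
      · exfalso
        have htt : ‖t * t'‖ < 1 := by
          rw [norm_mul]
          have h1 : ‖t‖ * ‖t'‖ ≤ 1 * ‖t'‖ := by
            gcongr
            exact le_of_lt (ht : ‖t‖ < 1)
          have h2 : (1:ℝ) * ‖t'‖ < 1 := by
            rw [one_mul]; exact ht'
          exact lt_of_le_of_lt h1 h2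
        exact one_sub_ne htt h'
  -- explicit formula for ψ on the disk
  have hψform : ∀ v : ℂ, ‖v‖ < 1 →
      ψ v = (v + cw * w) / (cw + v * (starRingEnd ℂ) w) ∧
      ‖ψ v‖ < 1 := by
    intro v hv
    obtain ⟨hζabs, hζeq⟩ := mobius_inv hw' hv
    set ζ := (v + cw * w) / (cw + v * (starRingEnd ℂ) w) with hζ
    have hζU : ζ ∈ unitDisk := hζabs
    have hBwζ : Bw ζ = v := by rw [hBw ζ]; exact hζeq
    have : ψ v = ζ := by rw [← hBwζ]; exact hψ1 ζ hζU
    exact ⟨this, by rw [this]; exact hζabs⟩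
  -- φ z = w
  have hBzz : Bz z = 0 := by rw [hBz z]; simp
  have hp0 : p 0 = 0 := by rw [hp 0]; simp
  have hψ0 : ψ 0 = w := by
    have hBww : Bw w = 0 := by rw [hBw w]; simp
    have := hψ1 w hw
    rw [hBww] at this
    exact this
  have hφz : φ z = w := by rw [hφ z, hBzz, hp0, hψ0]
  -- difference quotient identities
  have hcwwne : ∀ v : ℂ, ‖v‖ < 1 → cw + v * (starRingEnd ℂ) w ≠ 0 := by
    intro v hv
    apply ne_add
    rw [hcwabs]
    exact abs_mul_conj_lt hv hw'
  have step1 : ∀ v : ℂ, ‖v‖ < 1 →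
      ψ v - 1 = (1 - (starRingEnd ℂ) w) * (v - 1) / (cw + v * (starRingEnd ℂ) w) := by
    intro v hv
    rw [(hψform v hv).1, div_sub' (hcwwne v hv), div_eq_div_iff (hcwwne v hv) (hcwwne v hv)]
    rw [hcw]
    field_simp
    ring
  have step2 : ∀ t ∈ unitDisk, p t - 1 = 2 * (t - 1) / (s t + (1 - t)) := by
    intro t ht
    rw [hpform t ht, div_sub' (hsA t ht), div_eq_div_iff (hsA t ht) (hsA t ht)]
    ring
  have step3 : ∀ u ∈ unitDisk, Bz u - 1 =
      (u - 1) * ((1 - z * (starRingEnd ℂ) z) / ((1 - z) * (1 - u * (starRingEnd ℂ) z))) := by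
    intro u hu
    rw [hBz u, hcz]
    have h1 := hdenz u hu
    have h1' : 1 - (starRingEnd ℂ) z * u ≠ 0 := by rw [mul_comm]; exact h1
    field_simp
    ring
  -- the quotient function
  set F : ℂ → ℂ := fun u =>
    ((1 - (starRingEnd ℂ) w) / (cw + p (Bz u) * (starRingEnd ℂ) w)) *
    (2 / (s (Bz u) + (1 - Bz u))) *
    ((1 - z * (starRingEnd ℂ) z) / ((1 - z) * (1 - u * (starRingEnd ℂ) z))) with hF
  have hkey : ∀ u ∈ unitDisk, φ u - 1 = (u - 1) * F u := by
    intro u hu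
    have htU : Bz u ∈ unitDisk := hBzu u hu
    have hvU : p (Bz u) ∈ unitDisk := hpmem _ htU
    rw [hφ u, step1 _ hvU, step2 _ htU, step3 u hu, hF]
    have d1 := hcwwne _ (hvU : ‖p (Bz u)‖ < 1)
    have d2 := hsA _ htU
    have d3 := hdenz u hu
    field_simp
  -- limits along nhdsWithin 1 unitDisk
  have hden1z : (1:ℂ) - 1 * (starRingEnd ℂ) z ≠ 0 := by rw [one_mul]; exact hzc1
  have hBz1 : Tendsto Bz (nhdsWithin 1 unitDisk) (nhds 1) := by
    have hca : ContinuousAt (fun u : ℂ => cz * ((u - z) / (1 - u * (starRingEnd ℂ) z))) 1 := by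
      apply ContinuousAt.mul continuousAt_const
      exact ContinuousAt.div (continuousAt_id.sub continuousAt_const)
        (continuousAt_const.sub (continuousAt_id.mul continuousAt_const)) hden1z
    have hval : cz * ((1 - z) / (1 - 1 * (starRingEnd ℂ) z)) = 1 := by
      rw [hcz, one_mul]
      field_simp
    have h2 : Tendsto (fun u : ℂ => cz * ((u - z) / (1 - u * (starRingEnd ℂ) z)))
        (nhdsWithin 1 unitDisk) (nhds (cz * ((1 - z) / (1 - 1 * (starRingEnd ℂ) z)))) :=
      (hca.tendsto).mono_left nhdsWithin_le_nhds
    rw [hval] at h2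
    refine h2.congr ?_
    intro u
    rw [hBz u]
  have hBzW : Tendsto Bz (nhdsWithin 1 unitDisk) (nhdsWithin 1 unitDisk) := by
    rw [tendsto_nhdsWithin_iff]
    refine ⟨hBz1, ?_⟩
    filter_upwards [self_mem_nhdsWithin] with u hu
    exact hBzu u hu
  have hsBz : Tendsto (fun u => s (Bz u)) (nhdsWithin 1 unitDisk)
      (nhds ((2 * Real.sqrt α : ℝ) : ℂ)) :=
    (s_tendsto hα0 hs hs0 hssq).comp hBzW
  have hsqrtne : ((2 * Real.sqrt α : ℝ) : ℂ) ≠ 0 := by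
    have h1 : (0:ℝ) < 2 * Real.sqrt α := by positivity
    exact_mod_cast ne_of_gt h1
  have hd2t : Tendsto (fun u => s (Bz u) + (1 - Bz u)) (nhdsWithin 1 unitDisk)
      (nhds ((2 * Real.sqrt α : ℝ) : ℂ)) := by
    have h1 := hsBz.add (Tendsto.const_sub 1 hBz1)
    simpa using h1
  have hpt : Tendsto (fun u => p (Bz u)) (nhdsWithin 1 unitDisk) (nhds 1) := by
    have h1 : Tendsto (fun u => (s (Bz u) - (1 - Bz u)) / (s (Bz u) + (1 - Bz u)))
        (nhdsWithin 1 unitDisk) (nhds 1) := by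
      have hnum : Tendsto (fun u => s (Bz u) - (1 - Bz u)) (nhdsWithin 1 unitDisk)
          (nhds ((2 * Real.sqrt α : ℝ) : ℂ)) := by
        have h2 := hsBz.sub (Tendsto.const_sub 1 hBz1)
        simpa using h2
      have h3 := hnum.div hd2t hsqrtne
      rw [div_self hsqrtne] at h3
      exact h3
    refine h1.congr' ?_
    filter_upwards [self_mem_nhdsWithin] with u hu
    exact (hpform _ (hBzu u hu)).symm
  have hcwwlim : cw + 1 * (starRingEnd ℂ) w ≠ 0 := by
    apply ne_add
    rw [hcwabs, one_mul, Complex.norm_conj]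
    exact hw'
  have hduz : Tendsto (fun u : ℂ => (1 - z) * (1 - u * (starRingEnd ℂ) z))
      (nhdsWithin 1 unitDisk) (nhds ((1 - z) * (1 - 1 * (starRingEnd ℂ) z))) := by
    have hca : ContinuousAt (fun u : ℂ => (1 - z) * (1 - u * (starRingEnd ℂ) z)) 1 :=
      continuousAt_const.mul (continuousAt_const.sub (continuousAt_id.mul continuousAt_const))
    exact hca.tendsto.mono_left nhdsWithin_le_nhds
  set Lc : ℂ := ((1 - (starRingEnd ℂ) w) / (cw + 1 * (starRingEnd ℂ) w)) *
        (2 / ((2 * Real.sqrt α : ℝ) : ℂ)) *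
        ((1 - z * (starRingEnd ℂ) z) / ((1 - z) * (1 - 1 * (starRingEnd ℂ) z))) with hLc
  have hFt : Tendsto F (nhdsWithin 1 unitDisk) (nhds Lc) := by
    rw [hF, hLc]
    apply Tendsto.mul
    apply Tendsto.mul
    · exact tendsto_const_nhds.div
        (tendsto_const_nhds.add (hpt.mul tendsto_const_nhds)) hcwwlim
    · exact tendsto_const_nhds.div hd2t hsqrtne
    · exact tendsto_const_nhds.div hduz (mul_ne_zero hz1 hden1z)
  -- the limit value equals β
  have hsqrtαne : Real.sqrt α ≠ 0 := ne_of_gt (Real.sqrt_pos.2 hα0)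
  have f1 : (1 - (starRingEnd ℂ) w) / (cw + 1 * (starRingEnd ℂ) w)
      = ((‖1-w‖^2 / (1 - ‖w‖^2) : ℝ) : ℂ) := by
    have e1 : cw + 1 * (starRingEnd ℂ) w = (1 - w * (starRingEnd ℂ) w) / (1 - w) := by
      rw [hcw, one_mul]
      field_simp
      ring
    rw [e1, div_div_eq_mul_div]
    have e2 : (1 - (starRingEnd ℂ) w) * (1 - w) = ((‖1-w‖^2 : ℝ) : ℂ) := by
      rw [← conj_one_sub w]
      exact mul_conj_self (1 - w)
    rw [e2, one_sub_mul_conj w, ← Complex.ofReal_div]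
  have f2 : 2 / ((2 * Real.sqrt α : ℝ) : ℂ) = ((1 / Real.sqrt α : ℝ) : ℂ) := by
    push_cast
    rw [div_eq_div_iff (mul_ne_zero two_ne_zero (Complex.ofReal_ne_zero.2 hsqrtαne))
      (by exact_mod_cast hsqrtαne)]
    ring
  have f3 : (1 - z * (starRingEnd ℂ) z) / ((1 - z) * (1 - 1 * (starRingEnd ℂ) z))
      = (((1 - ‖z‖^2) / ‖1-z‖^2 : ℝ) : ℂ) := by
    rw [one_mul]
    have e2 : (1 - z) * (1 - (starRingEnd ℂ) z) = ((‖1-z‖^2 : ℝ) : ℂ) := by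
      rw [mul_comm, ← conj_one_sub z]
      exact mul_conj_self (1 - z)
    rw [e2, one_sub_mul_conj z, ← Complex.ofReal_div]
  have hLcβ : Lc = ((β : ℝ) : ℂ) := by
    rw [hLc, f1, f2, f3, hβ]
    push_cast
    ring
  -- angular derivative
  have hu_ne_one : ∀ u ∈ unitDisk, u - 1 ≠ 0 := by
    intro u hu h0
    have : u = 1 := by linear_combination h0
    rw [this] at hu
    have : ‖(1:ℂ)‖ < 1 := hu
    simp at this
  have hangular : HasAngularDerivAt φ 1 1 ((β : ℝ) : ℂ) := by
    constructor
    · intro k hk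
      have hmono : nhdsWithin (1:ℂ) (stolzAngle 1 k) ≤ nhdsWithin 1 unitDisk :=
        nhdsWithin_mono 1 (fun u hu => hu.1)
      have hsub1 : Tendsto (fun u : ℂ => u - 1) (nhdsWithin 1 unitDisk) (nhds 0) := by
        have h0 : ContinuousAt (fun u : ℂ => u - 1) 1 := continuousAt_id.sub continuousAt_const
        have := (h0.tendsto).mono_left (nhdsWithin_le_nhds (s := unitDisk))
        simpa using this
      have h1 : Tendsto (fun u => 1 + (u - 1) * F u) (nhdsWithin 1 unitDisk)
          (nhds (1 + 0 * Lc)) := tendsto_const_nhds.add (hsub1.mul hFt)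
      rw [show (1:ℂ) + 0 * Lc = 1 by ring] at h1
      have h2 : Tendsto φ (nhdsWithin 1 unitDisk) (nhds 1) := by
        refine h1.congr' ?_
        filter_upwards [self_mem_nhdsWithin] with u hu
        rw [← hkey u hu]
        ring
      exact h2.mono_left hmono
    · intro k hk
      have hmono : nhdsWithin (1:ℂ) (stolzAngle 1 k) ≤ nhdsWithin 1 unitDisk :=
        nhdsWithin_mono 1 (fun u hu => hu.1)
      have h1 : Tendsto (fun u => (φ u - 1) / (u - 1)) (nhdsWithin 1 unitDisk)
          (nhds Lc) := by
        refine hFt.congr' ?_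
        filter_upwards [self_mem_nhdsWithin] with u hu
        rw [hkey u hu, mul_comm, mul_div_assoc, div_self (hu_ne_one u hu), mul_one]
      rw [hLcβ] at h1
      exact h1.mono_left hmono
  -- mapsto and injectivity
  have hmaps : MapsTo φ unitDisk unitDisk := by
    intro u hu
    rw [hφ u]
    exact (hψform _ (hpmem _ (hBzu u hu))).2
  have hinj : InjOn φ unitDisk := by
    intro u hu v hv huv
    rw [hφ u, hφ v] at huv
    have h1 : Bw (ψ (p (Bz u))) = Bw (ψ (p (Bz v))) := by rw [huv]
    rw [hψ2 _ (hpmem _ (hBzu u hu)), hψ2 _ (hpmem _ (hBzu v hv))] at h1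
    exact hBzinj u hu v hv (hpinj _ (hBzu u hu) _ (hBzu v hv) h1)
  -- differentiability
  have hBzfun : Bz = fun ζ : ℂ => cz * ((ζ - z) / (1 - ζ * (starRingEnd ℂ) z)) := funext hBz
  have hBzda : ∀ x ∈ unitDisk, DifferentiableAt ℂ Bz x := by
    intro x hx
    rw [hBzfun]
    apply DifferentiableAt.const_mul
    exact DifferentiableAt.div (differentiableAt_id.sub (differentiableAt_const z))
      ((differentiableAt_const 1).sub (differentiableAt_id.mul (differentiableAt_const _)))
      (hdenz x hx)
  have hdiff : DifferentiableOn ℂ φ unitDisk := by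
    intro u hu
    apply DifferentiableAt.differentiableWithinAt
    set P : ℂ → ℂ := fun x => 4 * (α:ℂ) * Bz x / (1 - Bz x + s (Bz x)) ^ 2 with hP
    have hPu : P u = p (Bz u) := (hp (Bz u)).symm
    have hsBzda : DifferentiableAt ℂ (fun x => s (Bz x)) u :=
      DifferentiableAt.comp u
        (hs.differentiableAt (unitDisk_open.mem_nhds (hBzu u hu))) (hBzda u hu)
    have hPda : DifferentiableAt ℂ P u := by
      rw [hP]
      apply DifferentiableAt.div ((hBzda u hu).const_mul _)
      · exact (((differentiableAt_const 1).sub (hBzda u hu)).add hsBzda).pow 2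
      · exact pow_ne_zero 2 (hsA' _ (hBzu u hu))
    have hEda : DifferentiableAt ℂ
        (fun x => (P x + cw * w) / (cw + P x * (starRingEnd ℂ) w)) u := by
      apply DifferentiableAt.div (hPda.add_const _)
        ((hPda.mul_const _).const_add _)
      rw [hPu]
      exact hcwwne _ (hpmem _ (hBzu u hu) : ‖p (Bz u)‖ < 1)
    apply hEda.congr_of_eventuallyEq
    filter_upwards [unitDisk_open.mem_nhds hu] with x hx
    rw [hφ x, (hψform _ (hpmem _ (hBzu x hx))).1, hP]
    rw [hp (Bz x)]
  -- the derivative at z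
  have h0U : (0:ℂ) ∈ unitDisk := by
    show ‖(0:ℂ)‖ < 1
    simp
  have hzz1 : (1:ℂ) - z * (starRingEnd ℂ) z ≠ 0 := hdenz z hz'
  have hBzD : HasDerivAt Bz (cz / (1 - z * (starRingEnd ℂ) z)) z := by
    have hnum : HasDerivAt (fun u : ℂ => u - z) 1 z := (hasDerivAt_id z).sub_const z
    have hden : HasDerivAt (fun u : ℂ => 1 - u * (starRingEnd ℂ) z)
        (-(1 * (starRingEnd ℂ) z)) z := ((hasDerivAt_id z).mul_const _).const_sub 1
    have hdiv := (hnum.div hden hzz1).const_mul cz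
    rw [hBzfun]
    refine hdiv.congr_deriv ?_
    simp only [sub_self, zero_mul, sub_zero, one_mul]
    rw [mul_div_assoc', div_eq_div_iff (pow_ne_zero 2 hzz1) hzz1]
    ring
  have hsD : HasDerivAt s (deriv s 0) 0 :=
    (hs.differentiableAt (unitDisk_open.mem_nhds h0U)).hasDerivAt
  have hsD' : HasDerivAt s (deriv s 0) (Bz z) := by rw [hBzz]; exact hsD
  have hsBzD : HasDerivAt (fun u => s (Bz u))
      (deriv s 0 * (cz / (1 - z * (starRingEnd ℂ) z))) z := by
    have := HasDerivAt.comp z hsD' hBzD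
    simpa [Function.comp_def] using this
  have hpBzD : HasDerivAt (fun u => p (Bz u)) ((α:ℂ) * (cz / (1 - z * (starRingEnd ℂ) z))) z := by
    have hnum : HasDerivAt (fun u => 4 * (α:ℂ) * Bz u)
        (4 * (α:ℂ) * (cz / (1 - z * (starRingEnd ℂ) z))) z := hBzD.const_mul _
    have hinner : HasDerivAt (fun u => 1 - Bz u + s (Bz u))
        (-(cz / (1 - z * (starRingEnd ℂ) z)) + deriv s 0 * (cz / (1 - z * (starRingEnd ℂ) z))) z :=
      (hBzD.const_sub 1).add hsBzD
    have hpow := hinner.pow 2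
    have hdenne : ((1:ℂ) - Bz z + s (Bz z)) ^ 2 ≠ 0 := by
      rw [hBzz, hs0]
      norm_num
    have hdiv := hnum.div hpow hdenne
    have heq : (fun u => p (Bz u)) = fun u => 4 * (α:ℂ) * Bz u / (1 - Bz u + s (Bz u)) ^ 2 :=
      funext fun u => hp (Bz u)
    rw [heq]
    refine hdiv.congr_deriv ?_
    simp only [Pi.pow_apply]
    rw [hBzz, hs0]
    ring
  have hψD : HasDerivAt ψ ((1 - w * (starRingEnd ℂ) w) / cw) 0 := by
    have hcwne0 : cw + 0 * (starRingEnd ℂ) w ≠ 0 := by simpa using hcwne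
    have hgD := HasDerivAt.div ((hasDerivAt_id (0:ℂ)).add_const (cw * w))
      (((hasDerivAt_id (0:ℂ)).mul_const ((starRingEnd ℂ) w)).const_add cw) hcwne0
    have hgD2 : HasDerivAt (fun v => (v + cw * w) / (cw + v * (starRingEnd ℂ) w))
        ((1 - w * (starRingEnd ℂ) w) / cw) 0 := by
      refine hgD.congr_deriv ?_
      simp only [id, zero_mul, add_zero, mul_one, one_mul, zero_add]
      rw [div_eq_div_iff (pow_ne_zero 2 hcwne) hcwne]
      ring
    apply hgD2.congr_of_eventuallyEq
    filter_upwards [unitDisk_open.mem_nhds h0U] with v hv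
    exact (hψform v hv).1
  have hψD' : HasDerivAt ψ ((1 - w * (starRingEnd ℂ) w) / cw) (p (Bz z)) := by
    rw [hBzz, hp0]; exact hψD
  have hφD : HasDerivAt φ
      ((1 - w * (starRingEnd ℂ) w) / cw * ((α:ℂ) * (cz / (1 - z * (starRingEnd ℂ) z)))) z := by
    have hcomp := HasDerivAt.comp z hψD' hpBzD
    have heq : φ = fun u => ψ (p (Bz u)) := funext hφ
    rw [heq]
    simpa [Function.comp_def] using hcomp
  have hderiv := hφD.deriv
  have hZlt : ‖z‖ ^ 2 < 1 := by nlinarith [norm_nonneg z]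
  have hWlt : ‖w‖ ^ 2 < 1 := by nlinarith [norm_nonneg w]
  have hg6 : ‖deriv φ z‖ = α * (1 - ‖w‖ ^ 2) / (1 - ‖z‖ ^ 2) := by
    rw [hderiv, one_sub_mul_conj w, one_sub_mul_conj z]
    simp only [norm_mul, norm_div, hcwabs, hczabs, Complex.norm_real, Real.norm_eq_abs]
    rw [_root_.abs_of_nonneg (by linarith : (0:ℝ) ≤ 1 - ‖w‖ ^ 2),
      _root_.abs_of_nonneg (by linarith : (0:ℝ) ≤ 1 - ‖z‖ ^ 2)]
    rw [_root_.abs_of_nonneg hα0.le]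
    field_simp
  have habs1zne : ‖1 - z‖ ≠ 0 := norm_ne_zero_iff.mpr hz1
  have habs1wne : ‖1 - w‖ ≠ 0 := norm_ne_zero_iff.mpr hw1
  have hg7 : ‖deriv φ z‖ =
      (1 / β ^ 2) * ((1 - ‖z‖ ^ 2) / ‖1 - z‖ ^ 4) *
        (‖1 - w‖ ^ 4 / (1 - ‖w‖ ^ 2)) := by
    rw [hg6]
    have hβ2 : β ^ 2 = (1/α) * ((1 - ‖z‖ ^ 2)^2 / ‖1 - z‖ ^ 4) *
        (‖1 - w‖ ^ 4 / (1 - ‖w‖ ^ 2)^2) := by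
      rw [hβ]
      rw [mul_pow, mul_pow, div_pow, div_pow, div_pow, one_pow, Real.sq_sqrt hα0.le]
      ring
    rw [hβ2]
    have hαne : α ≠ 0 := ne_of_gt hα0
    have h1 : (1:ℝ) - ‖z‖ ^ 2 ≠ 0 := by linarith
    have h2 : (1:ℝ) - ‖w‖ ^ 2 ≠ 0 := by linarith
    field_simp
  exact ⟨hdiff, hinj, hmaps, hφz, hangular, hg6, hg7⟩
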